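/- Let $X:\Omega\times[0,2\pi]\to\mathbb{R}$ be $C^2$ and $2\pi$-periodic in $t$, and let $\bar{x}$ be a $2\pi$-periodic $C^1$ function that is noncritical, with deformation constant $M$ and accuracy $S=\|\bar{x}'-X(\bar{x}(\cdot),\cdot)\|_2$. Let $I=[\min_t\bar{x}(t)-2MS,\max_t\bar{x}(t)+2MS]\subset\Omega$ and $K\ge\max_{(x,t)\in I\times[0,2\pi]}|\partial^2_x X(x,t)|$. If $2M^2KS<1$, then there exists a $2\pi$-periodic solution $x^*$ of $x'=X(x,t)$ with $\|x^*-\bar{x}\|_\infty\le 2MS$, and $x^*$ is the unique periodic solution of the equation entirely contained in the strip $\{(x,t):|x-\bar{x}(t)|\le 2MS\}$. -/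

import Mathlib

open Real Set Filter

private lemma su_two_pi_pos : 0 < 2*π := by positivity

-- reduce any real to a representative in [0, 2π) with equal values for periodic functions
private lemma su_rep (t : ℝ) : ∃ s : ℝ, s ∈ Set.Ico 0 (2*π) ∧ ∀ (f : ℝ → ℝ), (∀ u, f (u + 2*π) = f u) → f t = f s := by
  refine ⟨t - ⌊t/(2*π)⌋ * (2*π), ⟨Int.sub_floor_div_mul_nonneg t su_two_pi_pos, Int.sub_floor_div_mul_lt t su_two_pi_pos⟩, ?_⟩
  intro f hf
  have hp : Function.Periodic f (2*π) := hf
  exact (hp.sub_int_mul_eq ⌊t/(2*π)⌋).symm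

private lemma su_caseA
    (X : ℝ → ℝ → ℝ)
    (hXcont : Continuous fun p : ℝ × ℝ => X p.1 p.2)
    (hXper : ∀ x t, X x (t + 2*π) = X x t)
    (xb xb' : ℝ → ℝ) (hxb : ∀ t, HasDerivAt xb (xb' t) t)
    (hxb' : Continuous xb') (hxbper : ∀ t, xb (t + 2*π) = xb t)
    (M S : ℝ)
    (hS : S = Real.sqrt ((1/(2*π)) * ∫ t in (0:ℝ)..(2*π), (xb' t - X (xb t) t)^2))
    (hS0 : S = 0) :
    ∃ x : ℝ → ℝ, (∀ t, HasDerivAt x (X (x t) t) t) ∧ (∀ t, x (t + 2*π) = x t) ∧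
      (∀ t, |x t - xb t| ≤ 2*M*S) ∧
      (∀ y : ℝ → ℝ, (∀ t, HasDerivAt y (X (y t) t) t) → (∀ t, y (t + 2*π) = y t) →
        (∀ t, |y t - xb t| ≤ 2*M*S) → y = x) := by
  have hxbc : Continuous xb := by
    rw [continuous_iff_continuousAt]; exact fun t => (hxb t).continuousAt
  set w : ℝ → ℝ := fun t => xb' t - X (xb t) t with hw
  have hwc : Continuous w := hxb'.sub (hXcont.comp (hxbc.prodMk continuous_id))
  have hIv : (∫ t in (0:ℝ)..(2*π), (w t)^2) = 0 := by
    have h1 : (1/(2*π)) * ∫ t in (0:ℝ)..(2*π), (w t)^2 ≤ 0 := by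
      have h0 : S = Real.sqrt ((1/(2*π)) * ∫ t in (0:ℝ)..(2*π), (w t)^2) := hS
      rw [hS0] at h0
      exact Real.sqrt_eq_zero'.mp h0.symm
    have h2 : 0 ≤ ∫ t in (0:ℝ)..(2*π), (w t)^2 :=
      intervalIntegral.integral_nonneg (le_of_lt su_two_pi_pos) (fun u _ => sq_nonneg _)
    have hc : (0:ℝ) < 1/(2*π) := by positivity
    rcases lt_or_eq_of_le h2 with hpos | heq
    · nlinarith [mul_pos hc hpos]
    · exact heq.symm
  have hw0 : ∀ t, w t = 0 := by
    intro t
    by_contra hne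
    obtain ⟨s, hs, hrep⟩ := su_rep t
    have hws : w s ≠ 0 := by
      have hper : ∀ u, w (u + 2*π) = w u := by
        intro u
        simp only [hw]
        rw [hxbper u, hXper (xb u) u]
        have : xb' (u + 2*π) = xb' u := by
          have h1 : HasDerivAt xb (xb' (u + 2*π)) u := by
            have h2 : HasDerivAt (fun v => xb (v + 2*π)) (xb' (u + 2*π) * 1) u :=
              (hxb (u + 2*π)).comp u ((hasDerivAt_id u).add_const (2*π))
            have h3 : (fun v => xb (v + 2*π)) = xb := funext hxbper
            rw [h3, mul_one] at h2; exact h2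
          exact h1.unique (hxb u)
        rw [this]
      rw [hrep w hper] at hne; exact hne
    have hpos : 0 < ∫ u in (0:ℝ)..(2*π), (w u)^2 := by
      apply intervalIntegral.integral_pos su_two_pi_pos
      · exact ((hwc.pow 2).continuousOn)
      · exact fun u _ => sq_nonneg _
      · exact ⟨s, ⟨hs.1, le_of_lt (lt_of_lt_of_le hs.2 le_rfl)⟩, by positivity⟩
    rw [hIv] at hpos; exact lt_irrefl 0 hpos
  have hxs : ∀ t, HasDerivAt xb (X (xb t) t) t := by
    intro t
    have := hxb t
    have h0 : xb' t = X (xb t) t := by have := hw0 t; simp only [hw] at this; linarith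
    rwa [h0] at this
  refine ⟨xb, hxs, hxbper, ?_, ?_⟩
  · intro t; simp [hS0]
  · intro y _ _ hy
    funext t
    have := hy t
    rw [hS0] at this
    simp only [mul_zero] at this
    have := abs_nonpos_iff.mp (by linarith [abs_nonneg (y t - xb t)] : |y t - xb t| ≤ 0)
    linarith


section
variable (X Xx Xxx : ℝ → ℝ → ℝ) (xb : ℝ → ℝ)

-- The difference quotient
noncomputable def suQ (X : ℝ → ℝ → ℝ) (xb : ℝ → ℝ) : ℝ → ℝ → ℝ :=
  fun h t => (X (xb t + h) t - X (xb t) t)/h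

private lemma su_Q_cont (hXcont : Continuous fun p : ℝ × ℝ => X p.1 p.2)
    (hxbc : Continuous xb) (h : ℝ) : Continuous (fun t => suQ X xb h t) := by
  unfold suQ
  apply Continuous.div_const
  exact (hXcont.comp (((hxbc.add continuous_const)).prodMk continuous_id)).sub
    (hXcont.comp (hxbc.prodMk continuous_id))

private lemma su_Q_tendsto (hX1 : ∀ x t, HasDerivAt (fun y => X y t) (Xx x t) x) (t : ℝ) :
    Tendsto (fun h => suQ X xb h t) (nhdsWithin 0 {(0:ℝ)}ᶜ) (nhds (Xx (xb t) t)) := by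
  have hd := hX1 (xb t) t
  rw [hasDerivAt_iff_tendsto_slope] at hd
  have hshift : Tendsto (fun h : ℝ => xb t + h) (nhdsWithin 0 {(0:ℝ)}ᶜ)
      (nhdsWithin (xb t) {xb t}ᶜ) := by
    rw [tendsto_nhdsWithin_iff]
    constructor
    · have h1 : Tendsto (fun h : ℝ => xb t + h) (nhds 0) (nhds (xb t)) := by
        simpa using (continuous_add_left (xb t)).tendsto (0:ℝ)
      exact h1.mono_left nhdsWithin_le_nhds
    · filter_upwards [self_mem_nhdsWithin] with h hh
      simp only [Set.mem_compl_iff, Set.mem_singleton_iff] at hh ⊢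
      intro hcon
      exact hh (by linarith)
  have hcomp := hd.comp hshift
  refine Tendsto.congr' ?_ hcomp
  filter_upwards [self_mem_nhdsWithin] with h hh
  have hh0 : h ≠ 0 := hh
  simp only [Function.comp_apply]
  rw [slope_def_field, suQ, add_sub_cancel_left]

-- the local second-order estimate
private lemma su_Q_est (hX1 : ∀ x t, HasDerivAt (fun y => X y t) (Xx x t) x)
    (hX2 : ∀ x t, HasDerivAt (fun y => Xx y t) (Xxx x t) x) (t : ℝ) :
    ∃ C : ℝ, 0 ≤ C ∧ ∃ δ : ℝ, 0 < δ ∧ ∀ h : ℝ, h ≠ 0 → |h| ≤ δ →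
      |suQ X xb h t - Xx (xb t) t| ≤ C * |h| := by
  have hφd : ∀ u : ℝ, HasDerivAt (fun v => Xx (xb t + v) t) (Xxx (xb t + u) t) u := by
    intro u
    have h1 : HasDerivAt (fun v : ℝ => xb t + v) 1 u := by
      simpa using (hasDerivAt_id u).const_add (xb t)
    have h2 := (hX2 (xb t + u) t).comp u h1
    simpa [Function.comp_def] using h2
  have hφc : Continuous (fun v => Xx (xb t + v) t) :=
    continuous_iff_continuousAt.mpr (fun u => (hφd u).continuousAt)
  set κ := Xxx (xb t) t with hκ
  have hd0 : HasDerivAt (fun v => Xx (xb t + v) t) κ 0 := by simpa using hφd 0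
  rw [hasDerivAt_iff_tendsto_slope] at hd0
  rw [Metric.tendsto_nhdsWithin_nhds] at hd0
  obtain ⟨δ, hδ, hprop⟩ := hd0 1 one_pos
  refine ⟨|κ| + 1, by positivity, δ/2, by positivity, ?_⟩
  intro h hne hle
  have hpoint : ∀ u : ℝ, |u| ≤ δ/2 → |Xx (xb t + u) t - Xx (xb t) t| ≤ ( |κ|+1)*|u| := by
    intro u hu
    rcases eq_or_ne u 0 with rfl | hu0
    · simp
    · have h1 := hprop hu0 (by rw [Real.dist_eq, sub_zero]; exact lt_of_le_of_lt hu (by linarith))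
      rw [Real.dist_eq] at h1
      have hs : slope (fun v => Xx (xb t + v) t) 0 u = (Xx (xb t + u) t - Xx (xb t) t)/u := by
        rw [slope_def_field]
        simp
      rw [hs] at h1
      have h2 : |(Xx (xb t + u) t - Xx (xb t) t)/u| ≤ |κ| + 1 := by
        calc |(Xx (xb t + u) t - Xx (xb t) t)/u|
            ≤ |(Xx (xb t + u) t - Xx (xb t) t)/u - κ| + |κ| := by
              have := abs_sub_abs_le_abs_sub ((Xx (xb t + u) t - Xx (xb t) t)/u) κ
              linarith [abs_abs κ]
          _ ≤ |κ| + 1 := by linarith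
      have h3 : |Xx (xb t + u) t - Xx (xb t) t| = |(Xx (xb t + u) t - Xx (xb t) t)/u| * |u| := by
        rw [← abs_mul]; congr 1; field_simp
      rw [h3]
      exact mul_le_mul_of_nonneg_right h2 (abs_nonneg u)
  have hFd : ∀ u : ℝ, HasDerivAt (fun v => X (xb t + v) t) (Xx (xb t + u) t) u := by
    intro u
    have h1 : HasDerivAt (fun v : ℝ => xb t + v) 1 u := by
      simpa using (hasDerivAt_id u).const_add (xb t)
    have h2 := (hX1 (xb t + u) t).comp u h1
    simpa [Function.comp_def] using h2
  have hInt : ∫ u in (0:ℝ)..h, Xx (xb t + u) t = X (xb t + h) t - X (xb t) t := by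
    have := intervalIntegral.integral_eq_sub_of_hasDerivAt (f := fun v => X (xb t + v) t)
      (fun u _ => hFd u) (hφc.intervalIntegrable 0 h)
    simpa using this
  have hsub : ∫ u in (0:ℝ)..h, (Xx (xb t + u) t - Xx (xb t) t)
      = (X (xb t + h) t - X (xb t) t) - h * Xx (xb t) t := by
    rw [intervalIntegral.integral_sub (hφc.intervalIntegrable 0 h)
      (intervalIntegrable_const), hInt, intervalIntegral.integral_const]
    simp [smul_eq_mul]
  have hbound : |∫ u in (0:ℝ)..h, (Xx (xb t + u) t - Xx (xb t) t)| ≤ (( |κ|+1)*|h|)*|h| := by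
    have h1 := intervalIntegral.norm_integral_le_of_norm_le_const
      (f := fun u => Xx (xb t + u) t - Xx (xb t) t) (a := 0) (b := h) (C := ( |κ|+1)*|h|) ?_
    · simpa using h1
    · intro u hu
      have h2 : |u| ≤ |h| := by
        rcases Set.mem_uIoc.mp hu with h3 | h3
        · rw [abs_of_pos h3.1]; exact le_trans h3.2 (le_abs_self h)
        · rw [abs_of_nonpos h3.2]; calc -u ≤ -h := by linarith [h3.1]
            _ ≤ |h| := neg_le_abs h
      rw [Real.norm_eq_abs]
      calc |Xx (xb t + u) t - Xx (xb t) t| ≤ ( |κ|+1)*|u| := hpoint u (le_trans h2 hle)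
        _ ≤ ( |κ|+1)*|h| := by
            apply mul_le_mul_of_nonneg_left h2 (by positivity)
  have heq : suQ X xb h t - Xx (xb t) t
      = (∫ u in (0:ℝ)..h, (Xx (xb t + u) t - Xx (xb t) t))/h := by
    rw [hsub, suQ]
    field_simp
  rw [heq, abs_div]
  rw [div_le_iff₀ (abs_pos.mpr hne)]
  exact hbound

end

section
variable (X Xx Xxx : ℝ → ℝ → ℝ) (xb : ℝ → ℝ)

noncomputable def suE (X : ℝ → ℝ → ℝ) (xb : ℝ → ℝ) (m : ℕ) : Set ℝ :=
  ⋂ (h : ℝ) (h' : ℝ) (_ : h ≠ 0) (_ : h' ≠ 0) (_ : |h| ≤ 1/((m:ℝ)+1)) (_ : |h'| ≤ 1/((m:ℝ)+1)),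
    {t : ℝ | |suQ X xb h t - suQ X xb h' t| ≤ ((m:ℝ)+1)*(|h| + |h'|)}

private lemma su_E_closed (hXcont : Continuous fun p : ℝ × ℝ => X p.1 p.2)
    (hxbc : Continuous xb) (m : ℕ) : IsClosed (suE X xb m) := by
  unfold suE
  refine isClosed_iInter (fun h => isClosed_iInter (fun h' => isClosed_iInter (fun _ =>
    isClosed_iInter (fun _ => isClosed_iInter (fun _ => isClosed_iInter (fun _ => ?_))))))
  exact isClosed_le (((su_Q_cont X xb hXcont hxbc h).sub (su_Q_cont X xb hXcont hxbc h')).abs)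
    continuous_const

private lemma su_E_cover (hX1 : ∀ x t, HasDerivAt (fun y => X y t) (Xx x t) x)
    (hX2 : ∀ x t, HasDerivAt (fun y => Xx y t) (Xxx x t) x) :
    ⋃ m, suE X xb m = Set.univ := by
  rw [Set.eq_univ_iff_forall]
  intro t
  obtain ⟨C, hC, δ, hδ, hest⟩ := su_Q_est X Xx Xxx xb hX1 hX2 t
  set m := ⌈max C (1/δ)⌉₊ with hm
  have hCm : C ≤ (m:ℝ)+1 := by
    calc C ≤ max C (1/δ) := le_max_left _ _
      _ ≤ (⌈max C (1/δ)⌉₊ : ℝ) := Nat.le_ceil _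
      _ ≤ (m:ℝ)+1 := by rw [hm]; linarith
  have hδm : 1/((m:ℝ)+1) ≤ δ := by
    have h1 : 1/δ ≤ (m:ℝ)+1 := by
      calc 1/δ ≤ max C (1/δ) := le_max_right _ _
        _ ≤ (⌈max C (1/δ)⌉₊ : ℝ) := Nat.le_ceil _
        _ ≤ (m:ℝ)+1 := by rw [hm]; linarith
    calc 1/((m:ℝ)+1) ≤ 1/(1/δ) := by
          apply one_div_le_one_div_of_le (by positivity) h1
      _ = δ := one_div_one_div δ
  apply Set.mem_iUnion.mpr
  refine ⟨m, ?_⟩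
  unfold suE
  simp only [Set.mem_iInter, Set.mem_setOf_eq]
  intro h h' hne hne' hh hh'
  have e1 := hest h hne (le_trans hh hδm)
  have e2 := hest h' hne' (le_trans hh' hδm)
  calc |suQ X xb h t - suQ X xb h' t|
      ≤ |suQ X xb h t - Xx (xb t) t| + |suQ X xb h' t - Xx (xb t) t| := by
        have := abs_sub_le (suQ X xb h t) (Xx (xb t) t) (suQ X xb h' t)
        rw [abs_sub_comm (Xx (xb t) t) (suQ X xb h' t)] at this
        exact this
    _ ≤ C*|h| + C*|h'| := add_le_add e1 e2
    _ ≤ ((m:ℝ)+1)*(|h| + |h'|) := by nlinarith [abs_nonneg h, abs_nonneg h']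

end

-- derivative of x * |x|
private lemma su_mul_abs_deriv (c : ℝ) : HasDerivAt (fun x : ℝ => x * |x|) (2*|c|) c := by
  rcases lt_trichotomy c 0 with hc | hc | hc
  · have h1 : HasDerivAt (fun x : ℝ => -(x^2)) (2*|c|) c := by
      have h2 := (hasDerivAt_pow 2 c).neg
      have h3 : -(((2:ℕ):ℝ) * c ^ (2-1)) = 2*|c| := by
        rw [abs_of_neg hc]; push_cast; ring
      rwa [h3] at h2
    apply h1.congr_of_eventuallyEq
    filter_upwards [eventually_lt_nhds hc] with x hx
    rw [abs_of_neg hx]; ring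
  · subst hc
    rw [hasDerivAt_iff_tendsto_slope]
    have he : (fun x : ℝ => |x|) =ᶠ[nhdsWithin 0 {(0:ℝ)}ᶜ] slope (fun x : ℝ => x * |x|) 0 := by
      filter_upwards [self_mem_nhdsWithin] with x hx
      have hx0 : x ≠ 0 := hx
      rw [slope_def_field]; simp only [abs_zero, mul_zero, sub_zero]
      rw [mul_div_cancel_left₀ _ hx0]
    rw [← Filter.tendsto_congr' he]
    exact Filter.Tendsto.mono_left (by simpa using continuous_abs.tendsto (0:ℝ)) nhdsWithin_le_nhds
  · have h1 : HasDerivAt (fun x : ℝ => x^2) (2*|c|) c := by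
      have h2 := hasDerivAt_pow 2 c
      have h3 : (((2:ℕ):ℝ) * c ^ (2-1)) = 2*|c| := by
        rw [abs_of_pos hc]; push_cast; ring
      rwa [h3] at h2
    apply h1.congr_of_eventuallyEq
    filter_upwards [eventually_gt_nhds hc] with x hx
    rw [abs_of_pos hx]; ring

-- bump profile
noncomputable def suPhi : ℝ → ℝ := fun u => (u^2 + u*|u|)/2

private lemma su_phi_deriv (c : ℝ) : HasDerivAt suPhi (c + |c|) c := by
  have h := ((hasDerivAt_pow 2 c).add (su_mul_abs_deriv c)).div_const 2
  have : ((2:ℕ) * c ^ (2-1) + 2*|c|)/2 = c + |c| := by push_cast; ring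
  rw [this] at h
  exact h

private lemma su_phi_nonpos {u : ℝ} (h : u ≤ 0) : suPhi u = 0 := by
  unfold suPhi; rw [abs_of_nonpos h]; ring

private lemma su_phi_pos {u : ℝ} (h : 0 < u) : 0 < suPhi u := by
  unfold suPhi; rw [abs_of_pos h]; nlinarith

private lemma su_dphi_nonpos {u : ℝ} (h : u ≤ 0) : u + |u| = 0 := by
  rw [abs_of_nonpos h]; ring

section
variable (X Xx Xxx : ℝ → ℝ → ℝ) (xb : ℝ → ℝ)

private lemma su_E_limit (hX1 : ∀ x t, HasDerivAt (fun y => X y t) (Xx x t) x) (m : ℕ)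
    (s : ℝ) (hs : s ∈ suE X xb m) :
    ∀ h : ℝ, h ≠ 0 → |h| ≤ 1/((m:ℝ)+1) → |suQ X xb h s - Xx (xb s) s| ≤ ((m:ℝ)+1)*|h| := by
  intro h hne hh
  simp only [suE, Set.mem_iInter, Set.mem_setOf_eq] at hs
  have l1 : Tendsto (fun h' : ℝ => |h'|) (nhdsWithin 0 {(0:ℝ)}ᶜ) (nhds 0) :=
    Tendsto.mono_left (by simpa using continuous_abs.tendsto (0:ℝ)) nhdsWithin_le_nhds
  have l2 : Tendsto (fun h' => |suQ X xb h' s - Xx (xb s) s|) (nhdsWithin 0 {(0:ℝ)}ᶜ) (nhds 0) := by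
    have h3 := ((su_Q_tendsto X Xx xb hX1 s).sub (tendsto_const_nhds (x := Xx (xb s) s))).abs
    simpa using h3
  have l3 : Tendsto (fun h' => ((m:ℝ)+1)*(|h| + |h'|) + |suQ X xb h' s - Xx (xb s) s|)
      (nhdsWithin 0 {(0:ℝ)}ᶜ) (nhds (((m:ℝ)+1)*|h|)) := by
    have h4 := (Tendsto.const_mul ((m:ℝ)+1) ((tendsto_const_nhds (x := |h|)).add l1)).add l2
    simpa using h4
  apply ge_of_tendsto l3
  have hsmall : ∀ᶠ h' in nhdsWithin (0:ℝ) {(0:ℝ)}ᶜ, |h'| ≤ 1/((m:ℝ)+1) :=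
    l1.eventually (eventually_le_nhds (by positivity))
  filter_upwards [self_mem_nhdsWithin, hsmall] with h' hne0 hsm
  have hne' : h' ≠ 0 := hne0
  have htri : |suQ X xb h s - Xx (xb s) s| ≤ |suQ X xb h s - suQ X xb h' s|
      + |suQ X xb h' s - Xx (xb s) s| := by
    have := abs_sub_le (suQ X xb h s) (suQ X xb h' s) (Xx (xb s) s)
    exact this
  calc |suQ X xb h s - Xx (xb s) s|
      ≤ |suQ X xb h s - suQ X xb h' s| + |suQ X xb h' s - Xx (xb s) s| := htri
    _ ≤ ((m:ℝ)+1)*(|h| + |h'|) + |suQ X xb h' s - Xx (xb s) s| := by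
        have := hs h h' hne hne' hh hsm
        linarith
    _ = _ := rfl

private lemma su_a_contAt (hX1 : ∀ x t, HasDerivAt (fun y => X y t) (Xx x t) x)
    (hXcont : Continuous fun p : ℝ × ℝ => X p.1 p.2) (hxbc : Continuous xb)
    (m : ℕ) (t₀ ε : ℝ) (hε : 0 < ε) (hball : Metric.ball t₀ ε ⊆ suE X xb m) :
    ∀ s ∈ Metric.ball t₀ ε, ContinuousAt (fun u => Xx (xb u) u) s := by
  intro s hs
  rw [Metric.continuousAt_iff]
  intro ε' hε'
  set h₀ : ℝ := min (1/((m:ℝ)+1)) (ε'/(6*((m:ℝ)+1))) with hh₀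
  have hh₀pos : 0 < h₀ := by
    apply lt_min (by positivity) (by positivity)
  have hh₀le : h₀ ≤ 1/((m:ℝ)+1) := min_le_left _ _
  have hh₀le2 : ((m:ℝ)+1) * h₀ ≤ ε'/6 := by
    have h1 : h₀ ≤ ε'/(6*((m:ℝ)+1)) := min_le_right _ _
    have h2 : (0:ℝ) < (m:ℝ)+1 := by positivity
    rw [le_div_iff₀ (by positivity)] at h1
    nlinarith
  have hQc := (su_Q_cont X xb hXcont hxbc h₀).continuousAt (x := s)
  rw [Metric.continuousAt_iff] at hQc
  obtain ⟨δ₁, hδ₁, hQprop⟩ := hQc (ε'/6) (by positivity)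
  obtain ⟨δ₂, hδ₂, hδ₂sub⟩ := Metric.mem_nhds_iff.mp (Metric.isOpen_ball.mem_nhds hs)
  refine ⟨min δ₁ δ₂, lt_min hδ₁ hδ₂, ?_⟩
  intro u hu
  have hu1 : dist u s < δ₁ := lt_of_lt_of_le hu (min_le_left _ _)
  have hu2 : u ∈ Metric.ball t₀ ε := hδ₂sub (by
    have : dist u s < δ₂ := lt_of_lt_of_le hu (min_le_right _ _)
    exact Metric.mem_ball.mpr this)
  have habs : |h₀| = h₀ := abs_of_pos hh₀pos
  have b1 : |suQ X xb h₀ u - Xx (xb u) u| ≤ ((m:ℝ)+1)*h₀ := by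
    have := su_E_limit X Xx xb hX1 m u (hball hu2) h₀ (ne_of_gt hh₀pos) (by rw [habs]; exact hh₀le)
    rwa [habs] at this
  have b2 : |suQ X xb h₀ s - Xx (xb s) s| ≤ ((m:ℝ)+1)*h₀ := by
    have := su_E_limit X Xx xb hX1 m s (hball hs) h₀ (ne_of_gt hh₀pos) (by rw [habs]; exact hh₀le)
    rwa [habs] at this
  have b3 : dist (suQ X xb h₀ u) (suQ X xb h₀ s) < ε'/6 := hQprop hu1
  rw [Real.dist_eq] at b3 ⊢
  have : |Xx (xb u) u - Xx (xb s) s| ≤ |suQ X xb h₀ u - Xx (xb u) u|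
      + |suQ X xb h₀ u - suQ X xb h₀ s| + |suQ X xb h₀ s - Xx (xb s) s| := by
    have t1 := abs_sub_le (Xx (xb u) u) (suQ X xb h₀ u) (Xx (xb s) s)
    have t2 := abs_sub_le (suQ X xb h₀ u) (suQ X xb h₀ s) (Xx (xb s) s)
    rw [abs_sub_comm (Xx (xb u) u) (suQ X xb h₀ u)] at t1
    linarith
  have hfin : |Xx (xb u) u - Xx (xb s) s| < ε' := by
    have h6 : ((m:ℝ)+1)*h₀ ≤ ε'/6 := hh₀le2
    linarith
  exact hfin

end

private lemma su_contAt_shift (f : ℝ → ℝ) (hper : ∀ u, f (u + 2*π) = f u) (s : ℝ) (k : ℤ)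
    (h : ContinuousAt f s) : ContinuousAt f (s + k*(2*π)) := by
  have hp : Function.Periodic f (2*π) := hper
  have he : (fun u => f (u - k*(2*π))) = f := by
    funext u; rw [hp.sub_int_mul_eq]
  have h2 : ContinuousAt (fun u => f (u - k*(2*π))) (s + k*(2*π)) := by
    have h3 : ContinuousAt f ((s + k*(2*π)) - k*(2*π)) := by
      have : (s + k*(2*π)) - k*(2*π) = s := by ring
      rw [this]; exact h
    exact ContinuousAt.comp (g := f) h3 ((continuous_id.sub continuous_const).continuousAt)
  rwa [he] at h2

section
variable (X Xx Xxx : ℝ → ℝ → ℝ) (xb xb' : ℝ → ℝ)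

private lemma su_Xx_tper (hX1 : ∀ x t, HasDerivAt (fun y => X y t) (Xx x t) x)
    (hXper : ∀ x t, X x (t + 2*π) = X x t) (x t : ℝ) : Xx x (t + 2*π) = Xx x t := by
  have h1 := hX1 x (t + 2*π)
  have h2 : (fun y => X y (t + 2*π)) = (fun y => X y t) := by
    funext y; exact hXper y t
  rw [h2] at h1
  exact h1.unique (hX1 x t)

private lemma su_caseB
    (hX1 : ∀ x t, HasDerivAt (fun y => X y t) (Xx x t) x)
    (hX2 : ∀ x t, HasDerivAt (fun y => Xx y t) (Xxx x t) x)
    (hXcont : Continuous fun p : ℝ × ℝ => X p.1 p.2)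
    (hXper : ∀ x t, X x (t + 2*π) = X x t)
    (hxb : ∀ t, HasDerivAt xb (xb' t) t) (hxbper : ∀ t, xb (t + 2*π) = xb t)
    (M : ℝ)
    (hM : ∀ b : ℝ → ℝ, Continuous b → (∀ t, b (t + 2*π) = b t) →
      ∀ y : ℝ → ℝ, (∀ t, HasDerivAt y (Xx (xb t) t * y t + b t) t) →
        (∀ t, y (t + 2*π) = y t) →
        ∀ t, |y t| ≤ M * Real.sqrt ((1/(2*π)) * ∫ s in (0:ℝ)..(2*π), (b s)^2))
    (hM0 : M ≤ 0) : False := by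
  have hxbc : Continuous xb := by
    rw [continuous_iff_continuousAt]; exact fun t => (hxb t).continuousAt
  -- the linearization coefficient
  set a : ℝ → ℝ := fun t => Xx (xb t) t with ha
  have haper : ∀ t, a (t + 2*π) = a t := by
    intro t
    simp only [ha]
    rw [hxbper t, su_Xx_tper X Xx hX1 hXper (xb t) t]
  -- Baire: an interval where a is continuous
  obtain ⟨m, hm⟩ := nonempty_interior_of_iUnion_of_closed
    (fun m => su_E_closed X xb hXcont hxbc m) (su_E_cover X Xx Xxx xb hX1 hX2)
  obtain ⟨t₀, ht₀⟩ := hm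
  obtain ⟨ε, hε, hball⟩ := Metric.mem_nhds_iff.mp (mem_interior_iff_mem_nhds.mp ht₀)
  have hacont : ∀ s ∈ Metric.ball t₀ ε, ContinuousAt a s :=
    su_a_contAt X Xx xb hX1 hXcont hxbc m t₀ ε hε hball
  -- bump parameters
  set δb : ℝ := min (ε/2) 1 with hδb
  have hδbpos : 0 < δb := lt_min (by positivity) one_pos
  have hδble : δb ≤ 1 := min_le_right _ _
  have hδblt : δb < ε := by
    have := min_le_left (ε/2) 1
    calc δb ≤ ε/2 := this
      _ < ε := by linarith
  have hδbπ : δb < π := lt_of_le_of_lt hδble (by linarith [Real.pi_gt_three])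
  -- the bump function
  set g : ℝ → ℝ := fun t => Real.cos (t - t₀) - Real.cos δb with hg
  set y : ℝ → ℝ := fun t => suPhi (g t) with hy
  set dy : ℝ → ℝ := fun t => (g t + |g t|) * (-Real.sin (t - t₀)) with hdy
  have hgc : Continuous g := by
    apply Continuous.sub _ continuous_const
    exact Real.continuous_cos.comp (continuous_id.sub continuous_const)
  have hgd : ∀ t, HasDerivAt g (-Real.sin (t - t₀)) t := by
    intro t
    have h1 : HasDerivAt (fun s : ℝ => s - t₀) 1 t := (hasDerivAt_id t).sub_const t₀
    have h2 := (Real.hasDerivAt_cos (t - t₀)).comp t h1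
    simpa [hg] using h2.sub_const (Real.cos δb)
  have hyd : ∀ t, HasDerivAt y (dy t) t := by
    intro t
    have h1 := (su_phi_deriv (g t)).comp t (hgd t)
    simpa [hy, hdy, Function.comp_def] using h1
  have hdyc : Continuous dy := by
    apply Continuous.mul (hgc.add hgc.abs)
    exact (Real.continuous_sin.comp (continuous_id.sub continuous_const)).neg
  have hyper : ∀ t, y (t + 2*π) = y t := by
    intro t
    simp only [hy, hg]
    congr 1
    rw [show t + 2*π - t₀ = (t - t₀) + 2*π by ring, Real.cos_add_two_pi]
  have hdyper : ∀ t, dy (t + 2*π) = dy t := by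
    intro t
    simp only [hdy, hg]
    rw [show t + 2*π - t₀ = (t - t₀) + 2*π by ring, Real.cos_add_two_pi, Real.sin_add_two_pi]
  -- y vanishes together with dy outside the support
  have hzero : ∀ t, g t < 0 → y t = 0 ∧ dy t = 0 := by
    intro t hgt
    constructor
    · exact su_phi_nonpos (le_of_lt hgt)
    · simp only [hdy]
      rw [su_dphi_nonpos (le_of_lt hgt), zero_mul]
  -- support points: a is continuous there
  have hsupp : ∀ t, 0 ≤ g t → ContinuousAt a t := by
    intro t hgt
    set k : ℤ := ⌊((t - t₀) + π)/(2*π)⌋ with hk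
    set r : ℝ := (t - t₀) - k*(2*π) with hr
    have two_pi_pos : (0:ℝ) < 2*π := by positivity
    have hr1 : -π ≤ r := by
      have := Int.sub_floor_div_mul_nonneg ((t - t₀) + π) two_pi_pos
      simp only [hr, hk]; linarith
    have hr2 : r < π := by
      have := Int.sub_floor_div_mul_lt ((t - t₀) + π) two_pi_pos
      simp only [hr, hk]; linarith
    have hcosr : Real.cos r = Real.cos (t - t₀) := by
      simp only [hr]
      exact Real.cos_sub_int_mul_two_pi (t - t₀) k
    have hrδ : |r| ≤ δb := by
      by_contra hcon
      push_neg at hcon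
      have h1 : Real.cos |r| < Real.cos δb := by
        apply Real.strictAntiOn_cos ⟨le_of_lt hδbpos, le_of_lt hδbπ⟩
          ⟨abs_nonneg r, ?_⟩ hcon
        rw [abs_le]; constructor <;> linarith
      rw [Real.cos_abs, hcosr] at h1
      simp only [hg] at hgt
      linarith
    have hmem : t₀ + r ∈ Metric.ball t₀ ε := by
      rw [Metric.mem_ball, Real.dist_eq]
      rw [show t₀ + r - t₀ = r by ring]
      exact lt_of_le_of_lt hrδ hδblt
    have hcont := su_contAt_shift a haper (t₀ + r) k (hacont _ hmem)
    have : t₀ + r + k*(2*π) = t := by simp only [hr]; ring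
    rwa [this] at hcont
  -- b for the linear equation
  set b : ℝ → ℝ := fun t => dy t - a t * y t with hb
  have hbper : ∀ t, b (t + 2*π) = b t := by
    intro t; simp only [hb]; rw [hdyper t, haper t, hyper t]
  have hbc : Continuous b := by
    rw [continuous_iff_continuousAt]
    intro t
    rcases lt_or_ge (g t) 0 with hgt | hgt
    · -- locally zero
      have hev : ∀ᶠ s in nhds t, b s = 0 := by
        have hnb : ∀ᶠ s in nhds t, g s < 0 := by
          have := (hgc.tendsto t).eventually (eventually_lt_nhds hgt)
          simpa using this
        filter_upwards [hnb] with s hs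
        obtain ⟨h1, h2⟩ := hzero s hs
        simp only [hb, h1, h2, mul_zero, sub_zero]
      have : ContinuousAt (fun _ : ℝ => (0:ℝ)) t := continuousAt_const
      exact this.congr (by filter_upwards [hev] with s hs; rw [hs])
    · have h1 : ContinuousAt a t := hsupp t hgt
      have h2 : ContinuousAt y t := (hyd t).continuousAt
      exact (hdyc.continuousAt).sub (h1.mul h2)
  -- apply hM
  have hODE : ∀ t, HasDerivAt y (Xx (xb t) t * y t + b t) t := by
    intro t
    have h1 : Xx (xb t) t * y t + b t = dy t := by simp only [hb, ha]; ring
    rw [h1]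
    exact hyd t
  have hfin := hM b hbc hbper y hODE hyper t₀
  have hyt₀ : 0 < y t₀ := by
    simp only [hy, hg]
    apply su_phi_pos
    rw [sub_self, Real.cos_zero]
    -- 1 - cos δb > 0
    rcases lt_or_eq_of_le (Real.cos_le_one δb) with h1 | h1
    · linarith
    · exfalso
      obtain ⟨n, hn⟩ := (Real.cos_eq_one_iff δb).mp h1
      rcases le_or_gt 1 n with h2 | h2
      · have : (1:ℝ) ≤ (n:ℝ) := by exact_mod_cast h2
        nlinarith [Real.pi_gt_three]
      · have h3 : n ≤ 0 := by omega
        have : (n:ℝ) ≤ 0 := by exact_mod_cast h3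
        nlinarith [Real.pi_gt_three]
  have hrhs : M * Real.sqrt ((1/(2*π)) * ∫ s in (0:ℝ)..(2*π), (b s)^2) ≤ 0 :=
    mul_nonpos_iff.mpr (Or.inr ⟨hM0, Real.sqrt_nonneg _⟩)
  rw [abs_of_pos hyt₀] at hfin
  linarith

end


private lemma su_two_pi_pos' : 0 < 2*π := by positivity

private lemma su_rep' (t : ℝ) : ∃ s : ℝ, s ∈ Set.Ico 0 (2*π) ∧ ∀ (f : ℝ → ℝ), (∀ u, f (u + 2*π) = f u) → f t = f s := by
  refine ⟨t - ⌊t/(2*π)⌋ * (2*π), ⟨Int.sub_floor_div_mul_nonneg t su_two_pi_pos', Int.sub_floor_div_mul_lt t su_two_pi_pos'⟩, ?_⟩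
  intro f hf
  have hp : Function.Periodic f (2*π) := hf
  exact (hp.sub_int_mul_eq ⌊t/(2*π)⌋).symm

section
variable (X Xx Xxx : ℝ → ℝ → ℝ) (xb : ℝ → ℝ)

private lemma su_xb_bdd (hxbc : Continuous xb) (hxbper : ∀ t, xb (t + 2*π) = xb t) :
    ∀ t, sInf (Set.range xb) ≤ xb t ∧ xb t ≤ sSup (Set.range xb) := by
  have himg : Set.range xb ⊆ xb '' (Set.Icc 0 (2*π)) := by
    rintro v ⟨t, rfl⟩
    obtain ⟨s, hs, hrep⟩ := su_rep' t
    exact ⟨s, ⟨hs.1, le_of_lt hs.2⟩, (hrep xb hxbper).symm⟩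
  have hcomp : IsCompact (xb '' (Set.Icc 0 (2*π))) := (isCompact_Icc).image hxbc
  have hbddA : BddAbove (Set.range xb) := hcomp.bddAbove.mono himg
  have hbddB : BddBelow (Set.range xb) := hcomp.bddBelow.mono himg
  intro t
  exact ⟨csInf_le hbddB (Set.mem_range_self t), le_csSup hbddA (Set.mem_range_self t)⟩

private lemma su_lip (hX2 : ∀ x t, HasDerivAt (fun y => Xx y t) (Xxx x t) x)
    (K lo hi t : ℝ) (hb : ∀ u ∈ Set.Icc lo hi, |Xxx u t| ≤ K)
    (u v : ℝ) (hu : u ∈ Set.Icc lo hi) (hv : v ∈ Set.Icc lo hi) :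
    |Xx v t - Xx u t| ≤ K * |v - u| := by
  have h := Convex.norm_image_sub_le_of_norm_hasDerivWithin_le
    (f := fun x => Xx x t) (f' := fun x => Xxx x t) (s := Set.Icc lo hi)
    (fun x _ => (hX2 x t).hasDerivWithinAt)
    (fun x hx => by rw [Real.norm_eq_abs]; exact hb x hx) (convex_Icc lo hi) hu hv
  simpa [Real.norm_eq_abs] using h

private lemma su_taylor (hX1 : ∀ x t, HasDerivAt (fun y => X y t) (Xx x t) x)
    (hX2 : ∀ x t, HasDerivAt (fun y => Xx y t) (Xxx x t) x)
    (K lo hi t : ℝ) (hb : ∀ u ∈ Set.Icc lo hi, |Xxx u t| ≤ K)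
    (u v : ℝ) (hu : u ∈ Set.Icc lo hi) (hv : v ∈ Set.Icc lo hi) :
    |X v t - X u t - Xx u t * (v - u)| ≤ K * (v - u)^2 / 2 := by
  have hXxc : Continuous (fun s => Xx s t) :=
    continuous_iff_continuousAt.mpr (fun s => (hX2 s t).continuousAt)
  have hFTC : ∫ s in u..v, Xx s t = X v t - X u t := by
    apply intervalIntegral.integral_eq_sub_of_hasDerivAt (fun s _ => hX1 s t)
      (hXxc.intervalIntegrable u v)
  have hsub : ∫ s in u..v, (Xx s t - Xx u t) = X v t - X u t - Xx u t * (v - u) := by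
    rw [intervalIntegral.integral_sub (hXxc.intervalIntegrable u v) intervalIntegrable_const,
      hFTC, intervalIntegral.integral_const]
    simp [smul_eq_mul]; ring
  rw [← hsub]
  rcases le_total u v with huv | huv
  · have h1 := intervalIntegral.abs_integral_le_integral_abs
      (f := fun s => Xx s t - Xx u t) (μ := MeasureTheory.volume) huv
    have h2 : ∫ s in u..v, |Xx s t - Xx u t| ≤ ∫ s in u..v, K*(s - u) := by
      apply intervalIntegral.integral_mono_on huv
        (((hXxc.sub continuous_const).abs).intervalIntegrable u v)
        ((continuous_const.mul (continuous_id.sub continuous_const)).intervalIntegrable u v)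
      intro s hs
      have hsmem : s ∈ Set.Icc lo hi := ⟨le_trans hu.1 hs.1, le_trans hs.2 hv.2⟩
      have h3 := su_lip Xx Xxx hX2 K lo hi t hb u s hu hsmem
      rwa [abs_of_nonneg (by linarith [hs.1] : (0:ℝ) ≤ s - u)] at h3
    have h3 : ∫ s in u..v, K*(s-u) = K*(v-u)^2/2 := by
      rw [intervalIntegral.integral_const_mul]
      have h4 : ∫ s in u..v, (s - u) = (v-u)^2/2 := by
        have h5 := intervalIntegral.integral_comp_sub_right (a := u) (b := v) (fun x => x) u
        rw [h5, integral_id]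
        ring_nf
      rw [h4]; ring
    linarith
  · have hsymm : (∫ s in u..v, (Xx s t - Xx u t)) = -∫ s in v..u, (Xx s t - Xx u t) :=
      intervalIntegral.integral_symm v u
    rw [hsymm, abs_neg]
    have h1 := intervalIntegral.abs_integral_le_integral_abs
      (f := fun s => Xx s t - Xx u t) (μ := MeasureTheory.volume) huv
    have h2 : ∫ s in v..u, |Xx s t - Xx u t| ≤ ∫ s in v..u, K*(u - s) := by
      apply intervalIntegral.integral_mono_on huv
        (((hXxc.sub continuous_const).abs).intervalIntegrable v u)
        ((continuous_const.mul (continuous_const.sub continuous_id)).intervalIntegrable v u)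
      intro s hs
      have hsmem : s ∈ Set.Icc lo hi := ⟨le_trans hv.1 hs.1, le_trans hs.2 hu.2⟩
      have h3 := su_lip Xx Xxx hX2 K lo hi t hb u s hu hsmem
      rwa [abs_of_nonpos (by linarith [hs.2] : s - u ≤ (0:ℝ)), neg_sub] at h3
    have h3 : ∫ s in v..u, K*(u-s) = K*(v-u)^2/2 := by
      rw [intervalIntegral.integral_const_mul]
      have h6 : ∫ s in v..u, (u - s) = (v-u)^2/2 := by
        have h7 := intervalIntegral.integral_sub (a := v) (b := u) (μ := MeasureTheory.volume)
          (intervalIntegrable_const (c := u)) (continuous_id.intervalIntegrable v u)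
        have h8 : (∫ s in v..u, (u - s)) = (∫ _ in v..u, u) - ∫ s in v..u, s := h7
        rw [h8, intervalIntegral.integral_const, integral_id]
        simp [smul_eq_mul]; ring
      rw [h6]; ring
    linarith
end



section
variable (X Xx Xxx : ℝ → ℝ → ℝ) (xb : ℝ → ℝ)

private lemma su_mvt (hX1 : ∀ x t, HasDerivAt (fun y => X y t) (Xx x t) x)
    (hX2 : ∀ x t, HasDerivAt (fun y => Xx y t) (Xxx x t) x)
    (K lo hi t R c : ℝ) (hb : ∀ u ∈ Set.Icc lo hi, |Xxx u t| ≤ K) (hK0 : 0 ≤ K)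
    (hR : 0 ≤ R) (hc : Set.Icc (c-R) (c+R) ⊆ Set.Icc lo hi)
    (u v : ℝ) (hu : u ∈ Set.Icc (c-R) (c+R)) (hv : v ∈ Set.Icc (c-R) (c+R)) :
    |X v t - X u t - Xx c t * (v - u)| ≤ (K*R) * |v - u| := by
  have hXc : Continuous (fun s => X s t) :=
    continuous_iff_continuousAt.mpr (fun s => (hX1 s t).continuousAt)
  have key : ∃ ξ ∈ Set.Icc (c-R) (c+R), X v t - X u t = Xx ξ t * (v-u) := by
    rcases lt_trichotomy u v with h | h | h
    · obtain ⟨ξ, hξ, hsl⟩ := exists_hasDerivAt_eq_slope (fun s => X s t) (fun s => Xx s t) h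
        hXc.continuousOn (fun s _ => hX1 s t)
      refine ⟨ξ, ⟨le_trans hu.1 (le_of_lt hξ.1), le_trans (le_of_lt hξ.2) hv.2⟩, ?_⟩
      have hne : v - u ≠ 0 := by intro hcon; apply absurd h; push_neg; linarith
      rw [hsl]
      field_simp
    · exact ⟨c, ⟨by linarith, by linarith⟩, by rw [h]; ring⟩
    · obtain ⟨ξ, hξ, hsl⟩ := exists_hasDerivAt_eq_slope (fun s => X s t) (fun s => Xx s t) h
        hXc.continuousOn (fun s _ => hX1 s t)
      refine ⟨ξ, ⟨le_trans hv.1 (le_of_lt hξ.1), le_trans (le_of_lt hξ.2) hu.2⟩, ?_⟩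
      have hne : u - v ≠ 0 := by intro hcon; apply absurd h; push_neg; linarith
      rw [hsl]
      field_simp
      ring
  obtain ⟨ξ, hξmem, hXvu⟩ := key
  rw [hXvu, show Xx ξ t*(v-u) - Xx c t*(v-u) = (Xx ξ t - Xx c t)*(v-u) from by ring, abs_mul]
  apply mul_le_mul_of_nonneg_right _ (abs_nonneg _)
  have hcm : c ∈ Set.Icc (c-R) (c+R) := ⟨by linarith, by linarith⟩
  have h4 := su_lip Xx Xxx hX2 K lo hi t hb c ξ (hc hcm) (hc hξmem)
  have h5 : |ξ - c| ≤ R := abs_le.mpr ⟨by linarith [hξmem.1], by linarith [hξmem.2]⟩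
  calc |Xx ξ t - Xx c t| ≤ K * |ξ - c| := h4
    _ ≤ K*R := mul_le_mul_of_nonneg_left h5 hK0

private lemma su_Q_tper (hXper : ∀ x t, X x (t + 2*π) = X x t)
    (hxbper : ∀ t, xb (t + 2*π) = xb t) (h t : ℝ) :
    suQ X xb h (t + 2*π) = suQ X xb h t := by
  unfold suQ
  rw [hxbper t, hXper (xb t + h) t, hXper (xb t) t]

private lemma su_Q_unif (hX1 : ∀ x t, HasDerivAt (fun y => X y t) (Xx x t) x)
    (hX2 : ∀ x t, HasDerivAt (fun y => Xx y t) (Xxx x t) x)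
    (hXper : ∀ x t, X x (t + 2*π) = X x t)
    (hxbc : Continuous xb) (hxbper : ∀ t, xb (t + 2*π) = xb t)
    (haper : ∀ t, Xx (xb (t + 2*π)) (t + 2*π) = Xx (xb t) t)
    (M S K : ℝ) (hK0 : 0 ≤ K)
    (hK : ∀ x ∈ Set.Icc (sInf (Set.range xb) - 2*M*S) (sSup (Set.range xb) + 2*M*S),
      ∀ t ∈ Set.Icc (0:ℝ) (2*π), |Xxx x t| ≤ K) :
    ∀ h : ℝ, h ≠ 0 → |h| ≤ 2*M*S → ∀ s : ℝ, |suQ X xb h s - Xx (xb s) s| ≤ K*|h| := by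
  intro h hne hh
  have hbdd := su_xb_bdd xb hxbc hxbper
  have base : ∀ s ∈ Set.Icc (0:ℝ) (2*π), |suQ X xb h s - Xx (xb s) s| ≤ K*|h| := by
    intro s hsmem
    have hbK : ∀ u ∈ Set.Icc (sInf (Set.range xb) - 2*M*S) (sSup (Set.range xb) + 2*M*S),
        |Xxx u s| ≤ K := fun u hu => hK u hu s hsmem
    have habs := abs_le.mp hh
    have hu : xb s ∈ Set.Icc (sInf (Set.range xb) - 2*M*S) (sSup (Set.range xb) + 2*M*S) := by
      constructor
      · have := (hbdd s).1; nlinarith [abs_nonneg h]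
      · have := (hbdd s).2; nlinarith [abs_nonneg h]
    have hv : xb s + h ∈ Set.Icc (sInf (Set.range xb) - 2*M*S) (sSup (Set.range xb) + 2*M*S) := by
      constructor
      · have := (hbdd s).1; linarith [habs.1]
      · have := (hbdd s).2; linarith [habs.2]
    have hT := su_taylor X Xx Xxx hX1 hX2 K _ _ s hbK (xb s) (xb s + h) hu hv
    have hnum : suQ X xb h s - Xx (xb s) s
        = (X (xb s + h) s - X (xb s) s - Xx (xb s) s * ((xb s + h) - xb s))/h := by
      unfold suQ
      field_simp
      ring
    rw [hnum, abs_div, div_le_iff₀ (abs_pos.mpr hne)]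
    calc |X (xb s + h) s - X (xb s) s - Xx (xb s) s * ((xb s + h) - xb s)|
        ≤ K*((xb s + h) - xb s)^2/2 := hT
      _ = K*h^2/2 := by ring
      _ ≤ K * |h| * |h| := by nlinarith [sq_abs h, sq_nonneg h]
  intro s
  obtain ⟨s', hs', hrep⟩ := su_rep' s
  have hfper : ∀ u, |suQ X xb h (u + 2*π) - Xx (xb (u + 2*π)) (u + 2*π)|
      = |suQ X xb h u - Xx (xb u) u| := by
    intro u
    rw [su_Q_tper X xb hXper hxbper h u, haper u]
  have heq := hrep (fun τ => |suQ X xb h τ - Xx (xb τ) τ|) hfper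
  have heq2 : |suQ X xb h s - Xx (xb s) s| = |suQ X xb h s' - Xx (xb s') s'| := heq
  rw [heq2]
  exact base s' ⟨hs'.1, le_of_lt hs'.2⟩

private lemma su_a_cont (hX1 : ∀ x t, HasDerivAt (fun y => X y t) (Xx x t) x)
    (hX2 : ∀ x t, HasDerivAt (fun y => Xx y t) (Xxx x t) x)
    (hXcont : Continuous fun p : ℝ × ℝ => X p.1 p.2)
    (hXper : ∀ x t, X x (t + 2*π) = X x t)
    (hxbc : Continuous xb) (hxbper : ∀ t, xb (t + 2*π) = xb t)
    (haper : ∀ t, Xx (xb (t + 2*π)) (t + 2*π) = Xx (xb t) t)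
    (M S K : ℝ) (hK0 : 0 ≤ K) (hMS : 0 < 2*M*S)
    (hK : ∀ x ∈ Set.Icc (sInf (Set.range xb) - 2*M*S) (sSup (Set.range xb) + 2*M*S),
      ∀ t ∈ Set.Icc (0:ℝ) (2*π), |Xxx x t| ≤ K) :
    Continuous (fun s => Xx (xb s) s) := by
  have hunif := su_Q_unif X Xx Xxx xb hX1 hX2 hXper hxbc hxbper haper M S K hK0 hK
  rw [continuous_iff_continuousAt]
  intro s
  rw [Metric.continuousAt_iff]
  intro ε' hε'
  set h₀ : ℝ := min (2*M*S) (ε'/(6*(K+1))) with hh₀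
  have hh₀pos : 0 < h₀ := lt_min hMS (by positivity)
  have hh₀le : h₀ ≤ 2*M*S := min_le_left _ _
  have hh₀le2 : K * h₀ ≤ ε'/6 := by
    have h1 : h₀ ≤ ε'/(6*(K+1)) := min_le_right _ _
    rw [le_div_iff₀ (by positivity)] at h1
    nlinarith
  have habs : |h₀| = h₀ := abs_of_pos hh₀pos
  have hQc := (su_Q_cont X xb hXcont hxbc h₀).continuousAt (x := s)
  rw [Metric.continuousAt_iff] at hQc
  obtain ⟨δ₁, hδ₁, hQprop⟩ := hQc (ε'/6) (by positivity)
  refine ⟨δ₁, hδ₁, ?_⟩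
  intro u hu
  have b1 : |suQ X xb h₀ u - Xx (xb u) u| ≤ K*h₀ := by
    have := hunif h₀ (ne_of_gt hh₀pos) (by rw [habs]; exact hh₀le) u
    rwa [habs] at this
  have b2 : |suQ X xb h₀ s - Xx (xb s) s| ≤ K*h₀ := by
    have := hunif h₀ (ne_of_gt hh₀pos) (by rw [habs]; exact hh₀le) s
    rwa [habs] at this
  have b3 : dist (suQ X xb h₀ u) (suQ X xb h₀ s) < ε'/6 := hQprop hu
  rw [Real.dist_eq] at b3 ⊢
  have htri : |Xx (xb u) u - Xx (xb s) s| ≤ |suQ X xb h₀ u - Xx (xb u) u|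
      + |suQ X xb h₀ u - suQ X xb h₀ s| + |suQ X xb h₀ s - Xx (xb s) s| := by
    have t1 := abs_sub_le (Xx (xb u) u) (suQ X xb h₀ u) (Xx (xb s) s)
    have t2 := abs_sub_le (suQ X xb h₀ u) (suQ X xb h₀ s) (Xx (xb s) s)
    rw [abs_sub_comm (Xx (xb u) u) (suQ X xb h₀ u)] at t1
    linarith
  linarith

end

section
variable (a b : ℝ → ℝ)

noncomputable def suA (a : ℝ → ℝ) : ℝ → ℝ := fun t => ∫ s in (0:ℝ)..t, a s

private lemma su_A_deriv (hac : Continuous a) (t : ℝ) : HasDerivAt (suA a) (a t) t :=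
  intervalIntegral.integral_hasDerivAt_right (hac.intervalIntegrable 0 t)
    (hac.stronglyMeasurableAtFilter _ _) hac.continuousAt

private lemma su_A_cont (hac : Continuous a) : Continuous (suA a) :=
  continuous_iff_continuousAt.mpr fun t => (su_A_deriv a hac t).continuousAt

private lemma su_A_add (hac : Continuous a) (haper : ∀ u, a (u + 2*π) = a u) (t : ℝ) :
    suA a (t + 2*π) = suA a t + suA a (2*π) := by
  unfold suA
  have h1 : (∫ s in (0:ℝ)..(t+2*π), a s)
      = (∫ s in (0:ℝ)..(2*π), a s) + ∫ s in (2*π)..(t+2*π), a s :=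
    (intervalIntegral.integral_add_adjacent_intervals (hac.intervalIntegrable 0 (2*π))
      (hac.intervalIntegrable (2*π) (t+2*π))).symm
  have h3 := intervalIntegral.integral_comp_add_right (a := 0) (b := t) a (2*π)
  have h4 : (∫ x in (0:ℝ)..t, a (x + 2*π)) = ∫ x in (0:ℝ)..t, a x := by
    apply intervalIntegral.integral_congr; intro x _; exact haper x
  rw [h4] at h3
  rw [zero_add] at h3
  rw [h1, ← h3]
  ring

noncomputable def suL (a b : ℝ → ℝ) : ℝ → ℝ := fun t =>
  Real.exp (suA a t) * ((Real.exp (suA a (2*π))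
      * (∫ s in (0:ℝ)..(2*π), Real.exp (-(suA a s)) * b s))/(1 - Real.exp (suA a (2*π)))
    + ∫ s in (0:ℝ)..t, Real.exp (-(suA a s)) * b s)

private lemma su_int_cont (hac : Continuous a) (hbc : Continuous b) :
    Continuous (fun s => Real.exp (-(suA a s)) * b s) :=
  (Real.continuous_exp.comp (su_A_cont a hac).neg).mul hbc

private lemma su_L_deriv (hac : Continuous a) (hbc : Continuous b) (t : ℝ) :
    HasDerivAt (suL a b) (a t * suL a b t + b t) t := by
  have hIc := su_int_cont a b hac hbc
  have hJd : HasDerivAt (fun u => ∫ s in (0:ℝ)..u, Real.exp (-(suA a s)) * b s)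
      (Real.exp (-(suA a t)) * b t) t :=
    intervalIntegral.integral_hasDerivAt_right (hIc.intervalIntegrable 0 t)
      (hIc.stronglyMeasurableAtFilter _ _) hIc.continuousAt
  have hEd : HasDerivAt (fun u => Real.exp (suA a u)) (Real.exp (suA a t) * a t) t :=
    (Real.hasDerivAt_exp (suA a t)).comp t (su_A_deriv a hac t)
  have h := hEd.mul (hJd.const_add ((Real.exp (suA a (2*π))
      * (∫ s in (0:ℝ)..(2*π), Real.exp (-(suA a s)) * b s))/(1 - Real.exp (suA a (2*π)))))
  have heq : Real.exp (suA a t) * a t * ((Real.exp (suA a (2*π))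
        * (∫ s in (0:ℝ)..(2*π), Real.exp (-(suA a s)) * b s))/(1 - Real.exp (suA a (2*π)))
      + ∫ s in (0:ℝ)..t, Real.exp (-(suA a s)) * b s)
      + Real.exp (suA a t) * (Real.exp (-(suA a t)) * b t)
      = a t * suL a b t + b t := by
    unfold suL
    rw [Real.exp_neg]
    field_simp
  rw [← heq]
  exact h

private lemma su_L_cont (hac : Continuous a) (hbc : Continuous b) : Continuous (suL a b) := by
  unfold suL
  apply Continuous.mul (Real.continuous_exp.comp (su_A_cont a hac))
  apply Continuous.add continuous_const
  exact intervalIntegral.continuous_primitive ((su_int_cont a b hac hbc).intervalIntegrable) 0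

private lemma su_L_per (hac : Continuous a) (hbc : Continuous b)
    (haper : ∀ u, a (u + 2*π) = a u) (hbper : ∀ u, b (u + 2*π) = b u)
    (hA2 : suA a (2*π) ≠ 0) (t : ℝ) : suL a b (t + 2*π) = suL a b t := by
  have hIc := su_int_cont a b hac hbc
  have hE2ne1 : Real.exp (suA a (2*π)) ≠ 1 := by
    intro hcon
    exact hA2 (by rwa [Real.exp_eq_one_iff] at hcon)
  have hsplit : (∫ s in (0:ℝ)..(t+2*π), Real.exp (-(suA a s)) * b s)
      = (∫ s in (0:ℝ)..(2*π), Real.exp (-(suA a s)) * b s)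
        + Real.exp (-(suA a (2*π))) * ∫ s in (0:ℝ)..t, Real.exp (-(suA a s)) * b s := by
    have h1 : (∫ s in (0:ℝ)..(t+2*π), Real.exp (-(suA a s)) * b s)
        = (∫ s in (0:ℝ)..(2*π), Real.exp (-(suA a s)) * b s)
          + ∫ s in (2*π)..(t+2*π), Real.exp (-(suA a s)) * b s :=
      (intervalIntegral.integral_add_adjacent_intervals (hIc.intervalIntegrable 0 (2*π))
        (hIc.intervalIntegrable (2*π) (t+2*π))).symm
    have h3 := intervalIntegral.integral_comp_add_right (a := 0) (b := t)
      (fun s => Real.exp (-(suA a s)) * b s) (2*π)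
    have h4 : (∫ x in (0:ℝ)..t, Real.exp (-(suA a (x + 2*π))) * b (x + 2*π))
        = ∫ x in (0:ℝ)..t, Real.exp (-(suA a (2*π))) * (Real.exp (-(suA a x)) * b x) := by
      apply intervalIntegral.integral_congr; intro x _
      show Real.exp (-(suA a (x + 2*π))) * b (x + 2*π)
        = Real.exp (-(suA a (2*π))) * (Real.exp (-(suA a x)) * b x)
      rw [su_A_add a hac haper x, hbper x, neg_add, Real.exp_add]
      ring
    rw [h4] at h3
    rw [intervalIntegral.integral_const_mul] at h3
    rw [zero_add] at h3
    rw [h1, ← h3]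
  unfold suL
  rw [su_A_add a hac haper t, Real.exp_add, hsplit, Real.exp_neg]
  have hne : 1 - Real.exp (suA a (2*π)) ≠ 0 := by
    intro hcon; apply hE2ne1; linarith
  field_simp
  ring

end

private lemma su_l2_le (f : ℝ → ℝ) (hfc : Continuous f) (c : ℝ) (hc : 0 ≤ c)
    (hb : ∀ s ∈ Set.Icc (0:ℝ) (2*π), |f s| ≤ c) :
    Real.sqrt ((1/(2*π)) * ∫ s in (0:ℝ)..(2*π), (f s)^2) ≤ c := by
  have h1 : (∫ s in (0:ℝ)..(2*π), (f s)^2) ≤ ∫ s in (0:ℝ)..(2*π), c^2 := by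
    apply intervalIntegral.integral_mono_on (le_of_lt su_two_pi_pos')
      ((hfc.pow 2).intervalIntegrable _ _) intervalIntegrable_const
    intro s hs
    have h2 := hb s hs
    show (f s)^2 ≤ c^2
    nlinarith [abs_nonneg (f s), sq_abs (f s)]
  have h2 : (∫ s in (0:ℝ)..(2*π), (c:ℝ)^2) = 2*π*c^2 := by
    rw [intervalIntegral.integral_const, smul_eq_mul, sub_zero]
  have h3 : (1/(2*π)) * ∫ s in (0:ℝ)..(2*π), (f s)^2 ≤ c^2 := by
    calc (1/(2*π)) * ∫ s in (0:ℝ)..(2*π), (f s)^2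
        ≤ (1/(2*π)) * (2*π*c^2) := by
          apply mul_le_mul_of_nonneg_left (le_trans h1 (le_of_eq h2)) (by positivity)
      _ = c^2 := by field_simp
  calc Real.sqrt ((1/(2*π)) * ∫ s in (0:ℝ)..(2*π), (f s)^2)
      ≤ Real.sqrt (c^2) := Real.sqrt_le_sqrt h3
    _ = c := Real.sqrt_sq hc

private lemma su_l2_S (w f : ℝ → ℝ) (hwc : Continuous w) (hfc : Continuous f)
    (S c : ℝ) (hS : 0 < S) (hc : 0 ≤ c)
    (hw2 : (∫ s in (0:ℝ)..(2*π), (w s)^2) = 2*π*S^2)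
    (hb : ∀ s ∈ Set.Icc (0:ℝ) (2*π), |f s| ≤ |w s| + c) :
    Real.sqrt ((1/(2*π)) * ∫ s in (0:ℝ)..(2*π), (f s)^2) ≤ S + c := by
  have habs : (∫ s in (0:ℝ)..(2*π), |w s|) ≤ 2*π*S := by
    have h1 : (∫ s in (0:ℝ)..(2*π), |w s|)
        ≤ ∫ s in (0:ℝ)..(2*π), ((w s)^2/(2*S) + S/2) := by
      apply intervalIntegral.integral_mono_on (le_of_lt su_two_pi_pos')
        (hwc.abs.intervalIntegrable _ _)
        ((((hwc.pow 2).div_const _).add continuous_const).intervalIntegrable _ _)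
      intro s _
      have h2S : (0:ℝ) < 2*S := by positivity
      have hcomb : (w s)^2/(2*S) + S/2 = ((w s)^2 + S^2)/(2*S) := by field_simp
      show |w s| ≤ (w s)^2/(2*S) + S/2
      rw [hcomb, le_div_iff₀ h2S]
      nlinarith [sq_nonneg (|w s| - S), sq_abs (w s)]
    have h2 : (∫ s in (0:ℝ)..(2*π), ((w s)^2/(2*S) + S/2))
        = (∫ s in (0:ℝ)..(2*π), (w s)^2)/(2*S) + (S/2)*(2*π) := by
      rw [intervalIntegral.integral_add (f := fun s => (w s)^2/(2*S)) (g := fun _ => S/2) (((hwc.pow 2).div_const _).intervalIntegrable _ _)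
        (intervalIntegrable_const), intervalIntegral.integral_div,
        intervalIntegral.integral_const, smul_eq_mul, sub_zero]
      ring
    rw [h2, hw2] at h1
    calc (∫ s in (0:ℝ)..(2*π), |w s|) ≤ 2*π*S^2/(2*S) + (S/2)*(2*π) := h1
      _ = 2*π*S := by field_simp; ring
  have h1 : (∫ s in (0:ℝ)..(2*π), (f s)^2)
      ≤ ∫ s in (0:ℝ)..(2*π), ((w s)^2 + 2*c*|w s| + c^2) := by
    apply intervalIntegral.integral_mono_on (le_of_lt su_two_pi_pos')
      ((hfc.pow 2).intervalIntegrable _ _)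
      ((((hwc.pow 2).add (continuous_const.mul hwc.abs)).add continuous_const).intervalIntegrable _ _)
    intro s hs
    have h2 := hb s hs
    show (f s)^2 ≤ (w s)^2 + 2*c*|w s| + c^2
    nlinarith [abs_nonneg (f s), sq_abs (f s), sq_abs (w s), abs_nonneg (w s)]
  have h2 : (∫ s in (0:ℝ)..(2*π), ((w s)^2 + 2*c*|w s| + c^2))
      = (∫ s in (0:ℝ)..(2*π), (w s)^2) + 2*c*(∫ s in (0:ℝ)..(2*π), |w s|) + 2*π*c^2 := by
    rw [intervalIntegral.integral_add (f := fun s => (w s)^2 + 2*c*|w s|) (g := fun _ => c^2) (((hwc.pow 2).add (continuous_const.mul hwc.abs)).intervalIntegrable _ _)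
      intervalIntegrable_const,
      intervalIntegral.integral_add (f := fun s => (w s)^2) (g := fun s => 2*c*|w s|) ((hwc.pow 2).intervalIntegrable _ _)
      ((continuous_const.mul hwc.abs).intervalIntegrable _ _),
      intervalIntegral.integral_const_mul, intervalIntegral.integral_const, smul_eq_mul,
      sub_zero]
  have h3 : (1/(2*π)) * ∫ s in (0:ℝ)..(2*π), (f s)^2 ≤ (S+c)^2 := by
    have h4 : (∫ s in (0:ℝ)..(2*π), (f s)^2) ≤ 2*π*(S+c)^2 := by
      rw [h2, hw2] at h1
      have h5 : 2*c*(∫ s in (0:ℝ)..(2*π), |w s|) ≤ 2*c*(2*π*S) :=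
        mul_le_mul_of_nonneg_left habs (by positivity)
      nlinarith
    calc (1/(2*π)) * ∫ s in (0:ℝ)..(2*π), (f s)^2
        ≤ (1/(2*π)) * (2*π*(S+c)^2) := mul_le_mul_of_nonneg_left h4 (by positivity)
      _ = (S+c)^2 := by field_simp
  calc Real.sqrt ((1/(2*π)) * ∫ s in (0:ℝ)..(2*π), (f s)^2)
      ≤ Real.sqrt ((S+c)^2) := Real.sqrt_le_sqrt h3
    _ = S + c := Real.sqrt_sq (by positivity)

section
variable (X Xx Xxx : ℝ → ℝ → ℝ) (xb xb' : ℝ → ℝ)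

private lemma su_caseC
    (hX1 : ∀ x t, HasDerivAt (fun y => X y t) (Xx x t) x)
    (hX2 : ∀ x t, HasDerivAt (fun y => Xx y t) (Xxx x t) x)
    (hXcont : Continuous fun p : ℝ × ℝ => X p.1 p.2)
    (hXper : ∀ x t, X x (t + 2*π) = X x t)
    (hxb : ∀ t, HasDerivAt xb (xb' t) t)
    (hxb' : Continuous xb') (hxbper : ∀ t, xb (t + 2*π) = xb t)
    (hnc : (∫ t in (0:ℝ)..(2*π), Xx (xb t) t) ≠ 0)
    (M : ℝ)
    (hM : ∀ b : ℝ → ℝ, Continuous b → (∀ t, b (t + 2*π) = b t) →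
      ∀ y : ℝ → ℝ, (∀ t, HasDerivAt y (Xx (xb t) t * y t + b t) t) →
        (∀ t, y (t + 2*π) = y t) →
        ∀ t, |y t| ≤ M * Real.sqrt ((1/(2*π)) * ∫ s in (0:ℝ)..(2*π), (b s)^2))
    (S : ℝ)
    (hS : S = Real.sqrt ((1/(2*π)) * ∫ t in (0:ℝ)..(2*π), (xb' t - X (xb t) t)^2))
    (K : ℝ)
    (hK : ∀ x ∈ Set.Icc (sInf (Set.range xb) - 2*M*S) (sSup (Set.range xb) + 2*M*S),
      ∀ t ∈ Set.Icc (0:ℝ) (2*π), |Xxx x t| ≤ K)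
    (hcontr : 2*M^2*K*S < 1)
    (hMpos : 0 < M) (hSpos : 0 < S) :
    ∃ x : ℝ → ℝ, (∀ t, HasDerivAt x (X (x t) t) t) ∧ (∀ t, x (t + 2*π) = x t) ∧
      (∀ t, |x t - xb t| ≤ 2*M*S) ∧
      (∀ y : ℝ → ℝ, (∀ t, HasDerivAt y (X (y t) t) t) → (∀ t, y (t + 2*π) = y t) →
        (∀ t, |y t - xb t| ≤ 2*M*S) → y = x) := by
  have hxbc : Continuous xb := by
    rw [continuous_iff_continuousAt]; exact fun t => (hxb t).continuousAt
  have hbdd := su_xb_bdd xb hxbc hxbper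
  have hMS : 0 < 2*M*S := by positivity
  -- periodicity helpers
  have hXxtper : ∀ x t, Xx x (t + 2*π) = Xx x t := by
    intro x t
    have h1 := hX1 x (t + 2*π)
    have h2 : (fun y => X y (t + 2*π)) = (fun y => X y t) := funext (fun y => hXper y t)
    rw [h2] at h1
    exact h1.unique (hX1 x t)
  have haper : ∀ t, Xx (xb (t + 2*π)) (t + 2*π) = Xx (xb t) t := by
    intro t; rw [hxbper t, hXxtper (xb t) t]
  have hxb'per : ∀ t, xb' (t + 2*π) = xb' t := by
    intro t
    have h1 : HasDerivAt (fun v => xb (v + 2*π)) (xb' (t + 2*π) * 1) t :=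
      (hxb (t + 2*π)).comp t ((hasDerivAt_id t).add_const (2*π))
    have h3 : (fun v => xb (v + 2*π)) = xb := funext hxbper
    rw [h3, mul_one] at h1
    exact h1.unique (hxb t)
  -- K is nonnegative
  have hxb0mem : xb 0 ∈ Set.Icc (sInf (Set.range xb) - 2*M*S) (sSup (Set.range xb) + 2*M*S) := by
    constructor
    · have := (hbdd 0).1; linarith
    · have := (hbdd 0).2; linarith
  have hK0 : 0 ≤ K :=
    le_trans (abs_nonneg _) (hK (xb 0) hxb0mem 0 ⟨le_rfl, le_of_lt su_two_pi_pos'⟩)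
  -- coefficient function and its continuity
  set aa : ℝ → ℝ := fun s => Xx (xb s) s with haa
  have hac : Continuous aa :=
    su_a_cont X Xx Xxx xb hX1 hX2 hXcont hXper hxbc hxbper haper M S K hK0 hMS hK
  have haaper : ∀ t, aa (t + 2*π) = aa t := fun t => haper t
  have hA2 : suA aa (2*π) ≠ 0 := by
    unfold suA
    simp only [haa]
    exact hnc
  -- contraction factor
  set q : ℝ := 2*M^2*K*S with hq
  have hq0 : 0 ≤ q := by rw [hq]; positivity
  have hq1 : q < 1 := hcontr
  -- the defect
  set w : ℝ → ℝ := fun s => xb' s - X (xb s) s with hw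
  have hwc : Continuous w := hxb'.sub (hXcont.comp (hxbc.prodMk continuous_id))
  have hwper : ∀ t, w (t + 2*π) = w t := by
    intro t; simp only [hw]; rw [hxb'per t, hxbper t, hXper (xb t) t]
  have hw2 : (∫ s in (0:ℝ)..(2*π), (w s)^2) = 2*π*S^2 := by
    have h1 : (0:ℝ) ≤ (1/(2*π)) * ∫ s in (0:ℝ)..(2*π), (w s)^2 := by
      apply mul_nonneg (by positivity)
      exact intervalIntegral.integral_nonneg (le_of_lt su_two_pi_pos') (fun u _ => sq_nonneg _)
    have h2 : S^2 = (1/(2*π)) * ∫ s in (0:ℝ)..(2*π), (w s)^2 := by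
      have h3 : S = Real.sqrt ((1/(2*π)) * ∫ s in (0:ℝ)..(2*π), (w s)^2) := hS
      rw [h3, Real.sq_sqrt h1]
    have hπ := su_two_pi_pos'
    rw [h2]
    field_simp
  -- the nonlinear operator data
  set Bf : BoundedContinuousFunction ℝ ℝ → ℝ → ℝ :=
    fun z s => X (xb s + z s) s - xb' s - aa s * z s with hBf
  have hBc : ∀ z : BoundedContinuousFunction ℝ ℝ, Continuous (Bf z) := by
    intro z
    simp only [hBf]
    exact ((hXcont.comp ((hxbc.add z.continuous).prodMk continuous_id)).sub hxb').sub
      (hac.mul z.continuous)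
  have hBper : ∀ z : BoundedContinuousFunction ℝ ℝ, (∀ t, z (t+2*π) = z t) →
      ∀ t, Bf z (t+2*π) = Bf z t := by
    intro z hzper t
    simp only [hBf]
    rw [hzper t, hxbper t, hXper (xb t + z t) t, hxb'per t, haaper t]
  -- solution operator facts
  have hLODE : ∀ z : BoundedContinuousFunction ℝ ℝ, ∀ t,
      HasDerivAt (suL aa (Bf z)) (aa t * suL aa (Bf z) t + Bf z t) t :=
    fun z t => su_L_deriv aa (Bf z) hac (hBc z) t
  have hLper : ∀ z : BoundedContinuousFunction ℝ ℝ, (∀ t, z (t+2*π) = z t) →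
      ∀ t, suL aa (Bf z) (t+2*π) = suL aa (Bf z) t :=
    fun z hzper t => su_L_per aa (Bf z) hac (hBc z) haaper (hBper z hzper) hA2 t
  have hLc : ∀ z : BoundedContinuousFunction ℝ ℝ, Continuous (suL aa (Bf z)) :=
    fun z => su_L_cont aa (Bf z) hac (hBc z)
  have hMLa : ∀ z : BoundedContinuousFunction ℝ ℝ, (∀ t, z (t+2*π) = z t) → ∀ t,
      |suL aa (Bf z) t| ≤ M * Real.sqrt ((1/(2*π)) * ∫ s in (0:ℝ)..(2*π), (Bf z s)^2) := by
    intro z hzper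
    exact hM (Bf z) (hBc z) (hBper z hzper) (suL aa (Bf z)) (fun t => hLODE z t) (hLper z hzper)
  -- pointwise bound on Bf for strip members
  have hBptw : ∀ z : BoundedContinuousFunction ℝ ℝ, (∀ t, |z t| ≤ 2*M*S) →
      ∀ s ∈ Set.Icc (0:ℝ) (2*π), |Bf z s| ≤ |w s| + q*S := by
    intro z hzbd s hsmem
    have hbK : ∀ u ∈ Set.Icc (sInf (Set.range xb) - 2*M*S) (sSup (Set.range xb) + 2*M*S),
        |Xxx u s| ≤ K := fun u hu => hK u hu s hsmem
    have habsz := abs_le.mp (hzbd s)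
    have hu : xb s ∈ Set.Icc (sInf (Set.range xb) - 2*M*S) (sSup (Set.range xb) + 2*M*S) := by
      constructor
      · have := (hbdd s).1; linarith
      · have := (hbdd s).2; linarith
    have hv : xb s + z s ∈ Set.Icc (sInf (Set.range xb) - 2*M*S)
        (sSup (Set.range xb) + 2*M*S) := by
      constructor
      · have := (hbdd s).1; linarith [habsz.1]
      · have := (hbdd s).2; linarith [habsz.2]
    have hT := su_taylor X Xx Xxx hX1 hX2 K _ _ s hbK (xb s) (xb s + z s) hu hv
    have hrw : Bf z s = (X (xb s + z s) s - X (xb s) s - Xx (xb s) s * ((xb s + z s) - xb s))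
        - w s := by
      simp only [hBf, hw, haa]; ring
    rw [hrw]
    have h1 := abs_sub (X (xb s + z s) s - X (xb s) s - Xx (xb s) s * ((xb s + z s) - xb s)) (w s)
    have h2 : K * ((xb s + z s) - xb s)^2/2 ≤ q*S := by
      have h3 : ((xb s + z s) - xb s)^2 ≤ (2*M*S)^2 := by nlinarith [habsz.1, habsz.2]
      rw [hq]; nlinarith
    linarith
  -- L² bound and sup bound for the image
  have hL2 : ∀ z : BoundedContinuousFunction ℝ ℝ, (∀ t, |z t| ≤ 2*M*S) →
      Real.sqrt ((1/(2*π)) * ∫ s in (0:ℝ)..(2*π), (Bf z s)^2) ≤ S + q*S := by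
    intro z hzbd
    exact su_l2_S w (Bf z) hwc (hBc z) S (q*S) hSpos (by positivity) hw2 (hBptw z hzbd)
  have hLbound : ∀ z : BoundedContinuousFunction ℝ ℝ, (∀ t, z (t+2*π) = z t) →
      (∀ t, |z t| ≤ 2*M*S) → ∀ t, |suL aa (Bf z) t| ≤ 2*M*S := by
    intro z hzper hzbd t
    have h1 := hMLa z hzper t
    have h2 := hL2 z hzbd
    calc |suL aa (Bf z) t| ≤ M * Real.sqrt ((1/(2*π)) * ∫ s in (0:ℝ)..(2*π), (Bf z s)^2) := h1
      _ ≤ M * (S + q*S) := mul_le_mul_of_nonneg_left h2 (le_of_lt hMpos)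
      _ ≤ 2*M*S := by nlinarith
  -- the complete metric space of candidates
  set SP : Set (BoundedContinuousFunction ℝ ℝ) :=
    {z | (∀ t, z (t+2*π) = z t) ∧ ∀ t, |z t| ≤ 2*M*S} with hSP
  have hSPc : IsClosed SP := by
    have hrw : SP = (⋂ t : ℝ, {z : BoundedContinuousFunction ℝ ℝ | z (t+2*π) = z t})
        ∩ (⋂ t : ℝ, {z : BoundedContinuousFunction ℝ ℝ | |z t| ≤ 2*M*S}) := by
      ext z
      simp only [hSP, Set.mem_setOf_eq, Set.mem_inter_iff, Set.mem_iInter]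
    rw [hrw]
    apply IsClosed.inter
    · exact isClosed_iInter (fun t => isClosed_eq
        (continuous_eval_const (t+2*π) : Continuous fun z : BoundedContinuousFunction ℝ ℝ => z (t+2*π))
        (continuous_eval_const t : Continuous fun z : BoundedContinuousFunction ℝ ℝ => z t))
    · exact isClosed_iInter (fun t => isClosed_le
        ((continuous_eval_const t : Continuous fun z : BoundedContinuousFunction ℝ ℝ => z t).abs) continuous_const)
  haveI hSPne : Nonempty ↥SP := by
    refine ⟨⟨0, ?_, ?_⟩⟩
    · intro t; simp
    · intro t; simp; linarith
  haveI : CompleteSpace ↥SP := hSPc.completeSpace_coe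
  -- the contraction map
  set T : ↥SP → ↥SP := fun z => ⟨BoundedContinuousFunction.ofNormedAddCommGroup
      (suL aa (Bf z.1)) (hLc z.1) (2*M*S)
      (fun t => by rw [Real.norm_eq_abs]; exact hLbound z.1 z.2.1 z.2.2 t),
    by
      constructor
      · intro t
        simp only [BoundedContinuousFunction.coe_ofNormedAddCommGroup]
        exact hLper z.1 z.2.1 t
      · intro t
        simp only [BoundedContinuousFunction.coe_ofNormedAddCommGroup]
        exact hLbound z.1 z.2.1 z.2.2 t⟩ with hT
  -- contraction estimate
  have hlip : ∀ z1 z2 : ↥SP, dist (T z1) (T z2) ≤ q * dist z1 z2 := by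
    intro z1 z2
    have hd0 : (0:ℝ) ≤ dist z1 z2 := dist_nonneg
    rw [Subtype.dist_eq]
    simp only [hT]
    apply (BoundedContinuousFunction.dist_le (by positivity)).mpr
    intro t
    simp only [BoundedContinuousFunction.coe_ofNormedAddCommGroup]
    rw [Real.dist_eq]
    set b12 : ℝ → ℝ := fun s => Bf z1.1 s - Bf z2.1 s with hb12
    have hb12c : Continuous b12 := (hBc z1.1).sub (hBc z2.1)
    have hb12per : ∀ u, b12 (u+2*π) = b12 u := by
      intro u
      simp only [hb12]
      rw [hBper z1.1 z1.2.1 u, hBper z2.1 z2.2.1 u]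
    have hyODE : ∀ u, HasDerivAt (fun v => suL aa (Bf z1.1) v - suL aa (Bf z2.1) v)
        (Xx (xb u) u * (suL aa (Bf z1.1) u - suL aa (Bf z2.1) u) + b12 u) u := by
      intro u
      have h := (hLODE z1.1 u).sub (hLODE z2.1 u)
      have heq : aa u * suL aa (Bf z1.1) u + Bf z1.1 u
          - (aa u * suL aa (Bf z2.1) u + Bf z2.1 u)
          = Xx (xb u) u * (suL aa (Bf z1.1) u - suL aa (Bf z2.1) u) + b12 u := by
        simp only [haa, hb12]; ring
      rw [heq] at h
      exact h
    have hyper : ∀ u, suL aa (Bf z1.1) (u+2*π) - suL aa (Bf z2.1) (u+2*π)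
        = suL aa (Bf z1.1) u - suL aa (Bf z2.1) u := by
      intro u
      rw [hLper z1.1 z1.2.1 u, hLper z2.1 z2.2.1 u]
    have hMy := hM b12 hb12c hb12per (fun v => suL aa (Bf z1.1) v - suL aa (Bf z2.1) v)
      hyODE hyper t
    have hptw : ∀ s ∈ Set.Icc (0:ℝ) (2*π), |b12 s| ≤ K*(2*M*S)*dist z1 z2 := by
      intro s hsmem
      have hbK : ∀ u ∈ Set.Icc (sInf (Set.range xb) - 2*M*S) (sSup (Set.range xb) + 2*M*S),
          |Xxx u s| ≤ K := fun u hu => hK u hu s hsmem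
      have habs1 := abs_le.mp (z1.2.2 s)
      have habs2 := abs_le.mp (z2.2.2 s)
      have hIccsub : Set.Icc (xb s - 2*M*S) (xb s + 2*M*S)
          ⊆ Set.Icc (sInf (Set.range xb) - 2*M*S) (sSup (Set.range xb) + 2*M*S) := by
        intro u hu
        constructor
        · have := (hbdd s).1; linarith [hu.1]
        · have := (hbdd s).2; linarith [hu.2]
      have hmv := su_mvt X Xx Xxx hX1 hX2 K
        (sInf (Set.range xb) - 2*M*S) (sSup (Set.range xb) + 2*M*S) s (2*M*S) (xb s)
        hbK hK0 (le_of_lt hMS) hIccsub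
        (xb s + z2.1 s) (xb s + z1.1 s)
        ⟨by linarith [habs2.1], by linarith [habs2.2]⟩
        ⟨by linarith [habs1.1], by linarith [habs1.2]⟩
      have hrw : b12 s = X (xb s + z1.1 s) s - X (xb s + z2.1 s) s
          - Xx (xb s) s * ((xb s + z1.1 s) - (xb s + z2.1 s)) := by
        simp only [hb12, hBf, haa]; ring
      have hzdist : |(xb s + z1.1 s) - (xb s + z2.1 s)| ≤ dist z1 z2 := by
        have h5 : (xb s + z1.1 s) - (xb s + z2.1 s) = z1.1 s - z2.1 s := by ring
        rw [h5, ← Real.dist_eq]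
        calc dist (z1.1 s) (z2.1 s) ≤ dist z1.1 z2.1 :=
              BoundedContinuousFunction.dist_coe_le_dist s
          _ = dist z1 z2 := (Subtype.dist_eq z1 z2).symm
      rw [hrw]
      calc |X (xb s + z1.1 s) s - X (xb s + z2.1 s) s
            - Xx (xb s) s * ((xb s + z1.1 s) - (xb s + z2.1 s))|
          ≤ (K*(2*M*S)) * |(xb s + z1.1 s) - (xb s + z2.1 s)| := hmv
        _ ≤ K*(2*M*S)*dist z1 z2 := by
            apply mul_le_mul_of_nonneg_left hzdist (by positivity)
    have hsq := su_l2_le b12 hb12c (K*(2*M*S)*dist z1 z2) (by positivity) hptw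
    calc |suL aa (Bf z1.1) t - suL aa (Bf z2.1) t|
        ≤ M * Real.sqrt ((1/(2*π)) * ∫ s in (0:ℝ)..(2*π), (b12 s)^2) := hMy
      _ ≤ M * (K*(2*M*S)*dist z1 z2) := mul_le_mul_of_nonneg_left hsq (le_of_lt hMpos)
      _ = q * dist z1 z2 := by rw [hq]; ring
  have hcontract : ContractingWith q.toNNReal T := by
    constructor
    · rw [Real.toNNReal_lt_one]; exact hq1
    · apply LipschitzWith.of_dist_le_mul
      intro z1 z2
      rw [Real.coe_toNNReal q hq0]
      exact hlip z1 z2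
  set zf : ↥SP := ContractingWith.fixedPoint T hcontract with hzf
  have hfix : T zf = zf := ContractingWith.fixedPoint_isFixedPt hcontract
  have hveq : ∀ t, suL aa (Bf zf.1) t = zf.1 t := by
    intro t
    have h1 := congrArg Subtype.val hfix
    have h2 := congrFun (congrArg DFunLike.coe h1) t
    simpa only [hT, BoundedContinuousFunction.coe_ofNormedAddCommGroup] using h2
  -- the solution
  set xx : ℝ → ℝ := fun t => xb t + zf.1 t with hxx
  have hxODE : ∀ t, HasDerivAt xx (X (xx t) t) t := by
    intro t
    have h1 := hLODE zf.1 t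
    have hfe : suL aa (Bf zf.1) = (fun u => zf.1 u) := funext hveq
    rw [hfe] at h1
    have h2 := (hxb t).add h1
    have hval : xb' t + (aa t * (fun u => zf.1 u) t + Bf zf.1 t) = X (xx t) t := by
      simp only [hBf, haa, hxx]
      ring
    rw [hval] at h2
    exact h2
  have hxc : Continuous xx := hxbc.add zf.1.continuous
  have hxper : ∀ t, xx (t+2*π) = xx t := by
    intro t; simp only [hxx]; rw [hxbper t, zf.2.1 t]
  have hxstrip : ∀ t, |xx t - xb t| ≤ 2*M*S := by
    intro t
    simp only [hxx]
    rw [show xb t + zf.1 t - xb t = zf.1 t from by ring]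
    exact zf.2.2 t
  refine ⟨xx, hxODE, hxper, hxstrip, ?_⟩
  -- uniqueness
  intro y hyODE hyper hystrip
  have hyc : Continuous y := by
    rw [continuous_iff_continuousAt]; exact fun t => (hyODE t).continuousAt
  set zd : ℝ → ℝ := fun t => y t - xx t with hzd
  have hzdc : Continuous zd := hyc.sub hxc
  have hzdper : ∀ t, zd (t+2*π) = zd t := by
    intro t; simp only [hzd]; rw [hyper t, hxper t]
  set bu : ℝ → ℝ := fun t => X (y t) t - X (xx t) t - Xx (xb t) t * zd t with hbu
  have hbuc : Continuous bu := by
    simp only [hbu, hzd]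
    have hacont : Continuous (fun t => Xx (xb t) t) := hac
    exact ((hXcont.comp (hyc.prodMk continuous_id)).sub
      (hXcont.comp (hxc.prodMk continuous_id))).sub (hacont.mul (hyc.sub hxc))
  have hbuper : ∀ t, bu (t+2*π) = bu t := by
    intro t
    simp only [hbu]
    rw [hyper t, hxper t, hzdper t, hXper (y t) t, hXper (xx t) t, haper t]
  have hzODE : ∀ t, HasDerivAt zd (Xx (xb t) t * zd t + bu t) t := by
    intro t
    have h := (hyODE t).sub (hxODE t)
    have heq : X (y t) t - X (xx t) t = Xx (xb t) t * zd t + bu t := by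
      simp only [hbu]; ring
    rw [heq] at h
    exact h
  have hMz := hM bu hbuc hbuper zd hzODE hzdper
  obtain ⟨tm, htm, hmax⟩ := IsCompact.exists_isMaxOn (isCompact_Icc (a := (0:ℝ)) (b := 2*π))
    ⟨0, ⟨le_rfl, le_of_lt su_two_pi_pos'⟩⟩ ((hzdc.abs).continuousOn)
  have hmax' : ∀ s ∈ Set.Icc (0:ℝ) (2*π), |zd s| ≤ |zd tm| := hmax
  have hptw : ∀ s ∈ Set.Icc (0:ℝ) (2*π), |bu s| ≤ K*(2*M*S)*|zd tm| := by
    intro s hsmem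
    have hbK : ∀ u ∈ Set.Icc (sInf (Set.range xb) - 2*M*S) (sSup (Set.range xb) + 2*M*S),
        |Xxx u s| ≤ K := fun u hu => hK u hu s hsmem
    have habs1 := abs_le.mp (hystrip s)
    have habs2 := abs_le.mp (hxstrip s)
    have hIccsub : Set.Icc (xb s - 2*M*S) (xb s + 2*M*S)
        ⊆ Set.Icc (sInf (Set.range xb) - 2*M*S) (sSup (Set.range xb) + 2*M*S) := by
      intro u hu
      constructor
      · have := (hbdd s).1; linarith [hu.1]
      · have := (hbdd s).2; linarith [hu.2]
    have hmv := su_mvt X Xx Xxx hX1 hX2 K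
      (sInf (Set.range xb) - 2*M*S) (sSup (Set.range xb) + 2*M*S) s (2*M*S) (xb s)
      hbK hK0 (le_of_lt hMS) hIccsub (xx s) (y s)
      ⟨by linarith [habs2.1], by linarith [habs2.2]⟩
      ⟨by linarith [habs1.1], by linarith [habs1.2]⟩
    have hrw : bu s = X (y s) s - X (xx s) s - Xx (xb s) s * (y s - xx s) := by
      simp only [hbu, hzd]
    rw [hrw]
    calc |X (y s) s - X (xx s) s - Xx (xb s) s * (y s - xx s)|
        ≤ (K*(2*M*S)) * |y s - xx s| := hmv
      _ ≤ K*(2*M*S)*|zd tm| := by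
          apply mul_le_mul_of_nonneg_left _ (by positivity)
          exact hmax' s hsmem
  have hsq := su_l2_le bu hbuc (K*(2*M*S)*|zd tm|) (by positivity) hptw
  have hfin : |zd tm| ≤ q * |zd tm| := by
    calc |zd tm| ≤ M * Real.sqrt ((1/(2*π)) * ∫ s in (0:ℝ)..(2*π), (bu s)^2) := hMz tm
      _ ≤ M * (K*(2*M*S)*|zd tm|) := mul_le_mul_of_nonneg_left hsq (le_of_lt hMpos)
      _ = q * |zd tm| := by rw [hq]; ring
  have hzm0 : |zd tm| ≤ 0 := by nlinarith [abs_nonneg (zd tm)]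
  funext t
  obtain ⟨s', hs', hrep⟩ := su_rep' t
  have h1 : zd t = zd s' := hrep zd hzdper
  have h2 : |zd s'| ≤ |zd tm| := hmax' s' ⟨hs'.1, le_of_lt hs'.2⟩
  have h3 : |zd t| ≤ 0 := by rw [h1]; linarith
  have h4 : zd t = 0 := abs_eq_zero.mp (le_antisymm h3 (abs_nonneg _))
  simp only [hzd] at h4
  linarith

end


theorem existence_uniqueness_periodic_solution
    (Ω : Set ℝ) (hΩ : IsOpen Ω)
    (X Xx Xxx : ℝ → ℝ → ℝ)
    (hX1 : ∀ x t, HasDerivAt (fun y => X y t) (Xx x t) x)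
    (hX2 : ∀ x t, HasDerivAt (fun y => Xx y t) (Xxx x t) x)
    (hXcont : Continuous fun p : ℝ × ℝ => X p.1 p.2)
    (hXper : ∀ x t, X x (t + 2*π) = X x t)
    (xb xb' : ℝ → ℝ) (hxb : ∀ t, HasDerivAt xb (xb' t) t)
    (hxb' : Continuous xb') (hxbper : ∀ t, xb (t + 2*π) = xb t)
    (hnc : (∫ t in (0:ℝ)..(2*π), Xx (xb t) t) ≠ 0)
    (M : ℝ)
    (hM : ∀ b : ℝ → ℝ, Continuous b → (∀ t, b (t + 2*π) = b t) →
      ∀ y : ℝ → ℝ, (∀ t, HasDerivAt y (Xx (xb t) t * y t + b t) t) →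
        (∀ t, y (t + 2*π) = y t) →
        ∀ t, |y t| ≤ M * Real.sqrt ((1/(2*π)) * ∫ s in (0:ℝ)..(2*π), (b s)^2))
    (S : ℝ)
    (hS : S = Real.sqrt ((1/(2*π)) * ∫ t in (0:ℝ)..(2*π), (xb' t - X (xb t) t)^2))
    (K : ℝ)
    (hI : Set.Icc (sInf (Set.range xb) - 2*M*S) (sSup (Set.range xb) + 2*M*S) ⊆ Ω)
    (hK : ∀ x ∈ Set.Icc (sInf (Set.range xb) - 2*M*S) (sSup (Set.range xb) + 2*M*S),
      ∀ t ∈ Set.Icc (0:ℝ) (2*π), |Xxx x t| ≤ K)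
    (hcontr : 2*M^2*K*S < 1) :
    ∃ x : ℝ → ℝ, (∀ t, HasDerivAt x (X (x t) t) t) ∧ (∀ t, x (t + 2*π) = x t) ∧
      (∀ t, |x t - xb t| ≤ 2*M*S) ∧
      (∀ y : ℝ → ℝ, (∀ t, HasDerivAt y (X (y t) t) t) → (∀ t, y (t + 2*π) = y t) →
        (∀ t, |y t - xb t| ≤ 2*M*S) → y = x) := by
  have hSnn : 0 ≤ S := by rw [hS]; exact Real.sqrt_nonneg _
  rcases eq_or_lt_of_le hSnn with hSz | hSpos
  · exact su_caseA X hXcont hXper xb xb' hxb hxb' hxbper M S hS hSz.symm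
  · rcases le_or_gt M 0 with hM0 | hMpos
    · exact (su_caseB X Xx Xxx xb xb' hX1 hX2 hXcont hXper hxb hxbper M hM hM0).elim
    · exact su_caseC X Xx Xxx xb xb' hX1 hX2 hXcont hXper hxb hxb' hxbper hnc M hM S hS K hK
        hcontr hMpos hSpos
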